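/- arXiv:2310.13311 — 3 statements merged into one kernel-verified Lean document; each statement's English description precedes it below -/
import Mathlib

section
/- Let V ∈ ℝ^{m×m} be symmetric positive definite and let 𝒮 ⊆ ℝ^{m×k} be a compact set. Define the iteration U_{t+1} ∈ argmax_{Ũ∈𝒮} tr(U_tᵀ V Ũ). Then tr(U_{t+1}ᵀ V U_{t+1}) ≥ tr(U_tᵀ V U_t) for all t (monotonicity of the conditional power iteration). -/
open Matrix

lemma trace_nonneg_of_posSemidef {n : ℕ} {A : Matrix (Fin n) (Fin n) ℝ}
    (hA : A.PosSemidef) : 0 ≤ A.trace := by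
  rw [Matrix.trace]
  apply Finset.sum_nonneg
  intro i _
  have := hA.2 (Finsupp.single i 1)
  simpa [dotProduct, Matrix.mulVec, Pi.single_apply, Finsupp.sum_single_index, Finset.sum_ite_eq,
    Finset.sum_ite_eq'] using this

theorem stmt4 (m k : ℕ) (V : Matrix (Fin m) (Fin m) ℝ) (hV : V.PosDef)
    (S : Set (Matrix (Fin m) (Fin k) ℝ)) (hS : IsCompact S)
    (U : ℕ → Matrix (Fin m) (Fin k) ℝ)
    (hmem : ∀ t, U t ∈ S)
    (hmax : ∀ t, ∀ W ∈ S,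
      Matrix.trace ((U t)ᵀ * V * W) ≤ Matrix.trace ((U t)ᵀ * V * (U (t + 1)))) :
    ∀ t, Matrix.trace ((U t)ᵀ * V * (U t)) ≤
      Matrix.trace ((U (t + 1))ᵀ * V * (U (t + 1))) := by
  intro t
  set A := U t
  set B := U (t + 1)
  have hVT : Vᵀ = V := by simpa using hV.isHermitian.eq
  have hsym : Matrix.trace (Aᵀ * V * B) = Matrix.trace (Bᵀ * V * A) := by
    conv_lhs => rw [← Matrix.trace_transpose]
    rw [Matrix.transpose_mul, Matrix.transpose_mul, Matrix.transpose_transpose, hVT,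
      Matrix.mul_assoc]
  have h1 : Matrix.trace (Aᵀ * V * A) ≤ Matrix.trace (Aᵀ * V * B) :=
    hmax t A (hmem t)
  have hpsd : ((A - B)ᵀ * V * (A - B)).PosSemidef := by
    have := hV.posSemidef.conjTranspose_mul_mul_same (A - B)
    simpa [Matrix.conjTranspose_eq_transpose_of_trivial] using this
  have h0 : 0 ≤ Matrix.trace ((A - B)ᵀ * V * (A - B)) :=
    trace_nonneg_of_posSemidef hpsd
  have hexp : Matrix.trace ((A - B)ᵀ * V * (A - B)) =
      Matrix.trace (Aᵀ * V * A) - Matrix.trace (Aᵀ * V * B)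
      - Matrix.trace (Bᵀ * V * A) + Matrix.trace (Bᵀ * V * B) := by
    simp [Matrix.transpose_sub, Matrix.sub_mul, Matrix.mul_sub, Matrix.trace_sub]
    ring
  rw [hexp, hsym] at h0
  linarith
end

section
/- Let V ∈ ℝ^{m×m} be symmetric positive definite, 𝒮 ⊆ ℝ^{m×k} compact and nonempty, and let (U_t) be generated by the conditional power iteration U_{t+1} ∈ argmax_{Ũ∈𝒮} tr(U_tᵀ V Ũ). Then the sequence of objective values tr(U_tᵀ V U_t) converges as t → ∞. -/
open Matrix Filter

theorem stmt5 (m k : ℕ) (V : Matrix (Fin m) (Fin m) ℝ) (hV : V.PosDef)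
    (S : Set (Matrix (Fin m) (Fin k) ℝ)) (hS : IsCompact S) (hSne : S.Nonempty)
    (U : ℕ → Matrix (Fin m) (Fin k) ℝ)
    (hmem : ∀ t, U t ∈ S)
    (hmax : ∀ t, ∀ W ∈ S,
      Matrix.trace ((U t)ᵀ * V * W) ≤ Matrix.trace ((U t)ᵀ * V * (U (t + 1)))) :
    ∃ L : ℝ, Tendsto (fun t => Matrix.trace ((U t)ᵀ * V * (U t))) atTop (nhds L) := by
  set W := (open MatrixOrder in CFC.sqrt V) with hWdef
  have hWW : W * W = V := open MatrixOrder in CFC.sqrt_mul_sqrt_self V hV.posSemidef.nonneg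
  have hWsym : Wᵀ = W := by
    have h := open MatrixOrder in (CFC.sqrt_nonneg V).posSemidef.isHermitian
    rwa [Matrix.IsHermitian, Matrix.conjTranspose_eq_transpose_of_trivial] at h
  have key : ∀ A B : Matrix (Fin m) (Fin k) ℝ,
      Matrix.trace (Aᵀ * V * B) = ∑ p : Fin m × Fin k, (W * A) p.1 p.2 * (W * B) p.1 p.2 := by
    intro A B
    have h1 : Aᵀ * V * B = (W * A)ᵀ * (W * B) := by
      rw [Matrix.transpose_mul, hWsym, ← hWW]
      simp only [Matrix.mul_assoc]
    rw [h1, Matrix.trace, Fintype.sum_prod_type]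
    simp only [Matrix.diag, Matrix.mul_apply, Matrix.transpose_apply]
    rw [Finset.sum_comm]
  set f : ℕ → ℝ := fun t => Matrix.trace ((U t)ᵀ * V * (U t)) with hf
  have hnonneg : ∀ A : Matrix (Fin m) (Fin k) ℝ, 0 ≤ Matrix.trace (Aᵀ * V * A) := by
    intro A
    rw [key]
    exact Finset.sum_nonneg fun p _ => mul_self_nonneg _
  have hcs : ∀ A B : Matrix (Fin m) (Fin k) ℝ,
      (Matrix.trace (Aᵀ * V * B)) ^ 2 ≤
        Matrix.trace (Aᵀ * V * A) * Matrix.trace (Bᵀ * V * B) := by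
    intro A B
    rw [key A B, key A A, key B B]
    have := Finset.sum_mul_sq_le_sq_mul_sq Finset.univ
      (fun p : Fin m × Fin k => (W * A) p.1 p.2) (fun p : Fin m × Fin k => (W * B) p.1 p.2)
    simpa [pow_two] using this
  have hmono : Monotone f := by
    refine monotone_nat_of_le_succ fun t => ?_
    have ha : 0 ≤ f t := hnonneg (U t)
    have hb : 0 ≤ f (t + 1) := hnonneg (U (t + 1))
    have hac : f t ≤ Matrix.trace ((U t)ᵀ * V * (U (t + 1))) := hmax t (U t) (hmem t)
    have hcsq : (Matrix.trace ((U t)ᵀ * V * (U (t + 1)))) ^ 2 ≤ f t * f (t + 1) :=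
      hcs (U t) (U (t + 1))
    rcases eq_or_lt_of_le ha with h0 | h0
    · rwa [← h0]
    · have h1 : f t ^ 2 ≤ (Matrix.trace ((U t)ᵀ * V * (U (t + 1)))) ^ 2 :=
        pow_le_pow_left₀ ha hac 2
      have h2 : f t * f t ≤ f t * f (t + 1) := by
        calc f t * f t = f t ^ 2 := (sq (f t)).symm
          _ ≤ f t * f (t + 1) := le_trans h1 hcsq
      exact le_of_mul_le_mul_left h2 h0
  have hcont : Continuous fun A : Matrix (Fin m) (Fin k) ℝ => Matrix.trace (Aᵀ * V * A) :=
    Continuous.matrix_trace ((continuous_id.matrix_transpose.matrix_mul continuous_const).matrix_mul continuous_id)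
  obtain ⟨A₀, -, hA₀⟩ := hS.exists_isMaxOn hSne hcont.continuousOn
  have hbdd : BddAbove (Set.range f) := by
    refine ⟨Matrix.trace (A₀ᵀ * V * A₀), ?_⟩
    rintro x ⟨t, rfl⟩
    exact hA₀ (hmem t)
  exact ⟨⨆ t, f t, tendsto_atTop_ciSup hmono hbdd⟩
end

section
/- Let V be symmetric positive definite and 𝒮 compact, and let (U_t) be generated by the conditional power iteration. Then for every ε > 0 there exists T ∈ ℕ such that Σ_{t=T}^∞ ‖U_{t+1} − U_t‖²_F ≤ ε. In particular, ‖U_{t+1} − U_t‖_F → 0. -/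
open Matrix Filter

private lemma trace_col_sum {m k : ℕ} (M : Matrix (Fin m) (Fin m) ℝ)
    (D : Matrix (Fin m) (Fin k) ℝ) :
    Matrix.trace (Dᵀ * M * D) = ∑ j, (fun i => D i j) ⬝ᵥ (M *ᵥ fun i => D i j) := by
  simp only [Matrix.trace, Matrix.diag, Matrix.mul_apply, Matrix.transpose_apply,
    dotProduct, Matrix.mulVec, Finset.sum_mul, Finset.mul_sum]
  refine Finset.sum_congr rfl fun j _ => ?_
  rw [Finset.sum_comm]
  exact Finset.sum_congr rfl fun i _ => Finset.sum_congr rfl fun l _ => by ring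

private lemma quad_lower {m : ℕ} (V : Matrix (Fin m) (Fin m) ℝ) (hV : V.PosDef) :
    ∃ c > (0:ℝ), ∀ x : Fin m → ℝ, c * (x ⬝ᵥ x) ≤ x ⬝ᵥ (V *ᵥ x) := by
  rcases Nat.eq_zero_or_pos m with hm | hm
  · subst hm
    exact ⟨1, one_pos, fun x => by simp [dotProduct]⟩
  · haveI : NeZero m := ⟨hm.ne'⟩
    have hΦ : Continuous fun x : Fin m → ℝ => x ⬝ᵥ (V *ᵥ x) := by
      simp only [dotProduct, Matrix.mulVec]
      exact continuous_finset_sum _ fun i _ => (continuous_apply i).mul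
        (continuous_finset_sum _ fun l _ => continuous_const.mul (continuous_apply l))
    set e := PiLp.continuousLinearEquiv 2 ℝ (fun _ : Fin m => ℝ)
    have hψ : Continuous fun x : EuclideanSpace ℝ (Fin m) => (e x) ⬝ᵥ (V *ᵥ (e x)) :=
      hΦ.comp e.continuous
    have hsph : (Metric.sphere (0 : EuclideanSpace ℝ (Fin m)) 1).Nonempty :=
      NormedSpace.sphere_nonempty.2 one_pos.le
    obtain ⟨x₀, hx₀, hx₀min⟩ := (isCompact_sphere (0 : EuclideanSpace ℝ (Fin m)) 1).exists_isMinOn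
      hsph hψ.continuousOn
    have hx₀ne : (e x₀ : Fin m → ℝ) ≠ 0 := by
      intro h
      have : x₀ = 0 := by
        apply e.injective
        simpa using h
      rw [this] at hx₀
      simp at hx₀
    set c := (e x₀) ⬝ᵥ (V *ᵥ (e x₀)) with hc
    have hcpos : 0 < c := by
      have := hV.dotProduct_mulVec_pos hx₀ne
      simpa using this
    refine ⟨c, hcpos, fun x => ?_⟩
    rcases eq_or_ne x 0 with rfl | hx
    · simp
    · set y : EuclideanSpace ℝ (Fin m) := e.symm x
      have hyne : y ≠ 0 := by
        simp only [y]
        intro h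
        apply hx
        have := congrArg e h
        simpa using this
      have hy : ‖y‖ ≠ 0 := norm_ne_zero_iff.2 hyne
      have hmem : (‖y‖⁻¹ • y) ∈ Metric.sphere (0 : EuclideanSpace ℝ (Fin m)) 1 := by
        simp [norm_smul, abs_of_nonneg (inv_nonneg.2 (norm_nonneg y)), inv_mul_cancel₀ hy]
      have hmin := hx₀min hmem
      have hey : e (‖y‖⁻¹ • y) = ‖y‖⁻¹ • x := by
        rw [_root_.map_smul]
        simp [y]
      have hmin' : c ≤ (‖y‖⁻¹ • x) ⬝ᵥ (V *ᵥ (‖y‖⁻¹ • x)) := by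
        have := hmin
        simp only [Set.mem_setOf_eq] at this
        rw [hey] at this
        exact this
      have hxx : x ⬝ᵥ x = ‖y‖ ^ 2 := by
        have : x ⬝ᵥ x = ∑ i, x i * x i := rfl
        rw [this, ← real_inner_self_eq_norm_sq]
        rw [PiLp.inner_apply]
        simp [y, RCLike.inner_apply]
        exact Finset.sum_congr rfl fun i _ => by rw [sq]; rfl
      have hsmul : (‖y‖⁻¹ • x) ⬝ᵥ (V *ᵥ (‖y‖⁻¹ • x)) = ‖y‖⁻¹ ^ 2 * (x ⬝ᵥ (V *ᵥ x)) := by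
        rw [Matrix.mulVec_smul, dotProduct_smul, smul_dotProduct]
        simp [smul_smul]
        ring
      rw [hsmul] at hmin'
      have hnpos : 0 < ‖y‖ := lt_of_le_of_ne (norm_nonneg y) (Ne.symm hy)
      have h5 := mul_le_mul_of_nonneg_left hmin' (le_of_lt (pow_pos hnpos 2))
      rw [hxx]
      calc c * ‖y‖ ^ 2 = ‖y‖ ^ 2 * c := by ring
        _ ≤ ‖y‖ ^ 2 * (‖y‖⁻¹ ^ 2 * (x ⬝ᵥ V *ᵥ x)) := h5
        _ = x ⬝ᵥ V *ᵥ x := by field_simp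

theorem stmt6 (m k : ℕ) (V : Matrix (Fin m) (Fin m) ℝ) (hV : V.PosDef)
    (S : Set (Matrix (Fin m) (Fin k) ℝ)) (hS : IsCompact S)
    (U : ℕ → Matrix (Fin m) (Fin k) ℝ)
    (hmem : ∀ t, U t ∈ S)
    (hmax : ∀ t, ∀ W ∈ S,
      Matrix.trace ((U t)ᵀ * V * W) ≤ Matrix.trace ((U t)ᵀ * V * (U (t + 1)))) :
    (∀ ε > (0 : ℝ), ∃ T : ℕ, ∀ n : ℕ,
      ∑ t ∈ Finset.range n,
        Matrix.trace ((U (T + t + 1) - U (T + t))ᵀ * (U (T + t + 1) - U (T + t))) ≤ ε) ∧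
    Tendsto (fun t =>
      Real.sqrt (Matrix.trace ((U (t + 1) - U t)ᵀ * (U (t + 1) - U t)))) atTop (nhds 0) := by
  obtain ⟨c, hc, hquad⟩ := quad_lower V hV
  set f : ℕ → ℝ := fun t => Matrix.trace ((U t)ᵀ * V * U t) with hf
  set d : ℕ → ℝ := fun t =>
    Matrix.trace ((U (t + 1) - U t)ᵀ * (U (t + 1) - U t)) with hdd
  set e' : ℕ → ℝ := fun t =>
    Matrix.trace ((U (t + 1) - U t)ᵀ * V * (U (t + 1) - U t)) with he'
  -- symmetry of the bilinear form
  have hsym : ∀ A B : Matrix (Fin m) (Fin k) ℝ,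
      Matrix.trace (Aᵀ * V * B) = Matrix.trace (Bᵀ * V * A) := by
    intro A B
    have hVs : Vᵀ = V := hV.1.eq
    rw [← Matrix.trace_transpose (Aᵀ * V * B)]
    simp [Matrix.transpose_mul, Matrix.mul_assoc, hVs]
  -- key pointwise bounds
  have hkey : ∀ D : Matrix (Fin m) (Fin k) ℝ,
      c * Matrix.trace (Dᵀ * D) ≤ Matrix.trace (Dᵀ * V * D) := by
    intro D
    have h1 : Matrix.trace (Dᵀ * D) = ∑ j, (fun i => D i j) ⬝ᵥ (fun i => D i j) := by
      have := trace_col_sum (1 : Matrix (Fin m) (Fin m) ℝ) D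
      simpa [Matrix.mul_one] using this
    rw [h1, trace_col_sum V D, Finset.mul_sum]
    exact Finset.sum_le_sum fun j _ => hquad _
  have hdnonneg : ∀ t, 0 ≤ d t := by
    intro t
    have h1 : d t = ∑ j, (fun i => (U (t+1) - U t) i j) ⬝ᵥ (fun i => (U (t+1) - U t) i j) := by
      have := trace_col_sum (1 : Matrix (Fin m) (Fin m) ℝ) (U (t+1) - U t)
      simpa [Matrix.mul_one, hdd] using this
    rw [h1]
    exact Finset.sum_nonneg fun j _ => Finset.sum_nonneg fun i _ => mul_self_nonneg _
  -- expansion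
  have hexp : ∀ t, e' t = f (t + 1) + f t - 2 * Matrix.trace ((U t)ᵀ * V * U (t + 1)) := by
    intro t
    simp only [he', hf, Matrix.transpose_sub, Matrix.sub_mul, Matrix.mul_sub, Matrix.trace_sub]
    rw [hsym (U (t + 1)) (U t)]
    ring
  have hstep : ∀ t, e' t ≤ f (t + 1) - f t := by
    intro t
    have h2 : f t ≤ Matrix.trace ((U t)ᵀ * V * U (t + 1)) := hmax t (U t) (hmem t)
    have := hexp t
    linarith
  have hmono : Monotone f := by
    apply monotone_nat_of_le_succ
    intro t
    have h0 : 0 ≤ e' t := le_trans (mul_nonneg hc.le (hdnonneg t)) (hkey _)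
    have := hstep t
    linarith
  -- boundedness
  have hg : Continuous fun W : Matrix (Fin m) (Fin k) ℝ => Matrix.trace (Wᵀ * V * W) :=
    ((continuous_id.matrix_transpose.matrix_mul continuous_const).matrix_mul
      continuous_id).matrix_trace
  obtain ⟨B, hB⟩ := (hS.image hg).bddAbove
  have hbdd : BddAbove (Set.range f) := by
    refine ⟨B, ?_⟩
    rintro x ⟨t, rfl⟩
    exact hB ⟨U t, hmem t, rfl⟩
  set L := ⨆ t, f t with hL
  have hfle : ∀ t, f t ≤ L := fun t => le_ciSup hbdd t
  have htend : Tendsto f atTop (nhds L) := tendsto_atTop_ciSup hmono hbdd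
  -- main tail-sum bound
  have part1 : ∀ ε > (0 : ℝ), ∃ T : ℕ, ∀ n : ℕ,
      ∑ t ∈ Finset.range n, d (T + t) ≤ ε := by
    intro ε hε
    have hcε : (0:ℝ) < c * ε := mul_pos hc hε
    have hev : ∀ᶠ T in atTop, L - c * ε < f T :=
      htend.eventually (eventually_gt_nhds (by linarith))
    obtain ⟨T, hT⟩ := hev.exists
    refine ⟨T, fun n => ?_⟩
    have h1 : c * ∑ t ∈ Finset.range n, d (T + t) ≤ ∑ t ∈ Finset.range n, e' (T + t) := by
      rw [Finset.mul_sum]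
      exact Finset.sum_le_sum fun t _ => hkey _
    have h2 : ∑ t ∈ Finset.range n, e' (T + t)
        ≤ ∑ t ∈ Finset.range n, (f (T + t + 1) - f (T + t)) :=
      Finset.sum_le_sum fun t _ => hstep _
    have h3 : ∑ t ∈ Finset.range n, (f (T + t + 1) - f (T + t)) = f (T + n) - f T := by
      exact Finset.sum_range_sub (fun i => f (T + i)) n
    have h4 : f (T + n) ≤ L := hfle _
    have h5 : c * ∑ t ∈ Finset.range n, d (T + t) ≤ c * ε := by linarith
    exact le_of_mul_le_mul_left h5 hc
  constructor
  · exact part1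
  · have hd0 : Tendsto d atTop (nhds 0) := by
      rw [Metric.tendsto_atTop]
      intro ε hε
      obtain ⟨T, hT⟩ := part1 (ε / 2) (by linarith)
      refine ⟨T, fun n hn => ?_⟩
      have hsingle : d n ≤ ∑ t ∈ Finset.range (n - T + 1), d (T + t) := by
        have hmemr : n - T ∈ Finset.range (n - T + 1) := Finset.self_mem_range_succ _
        have := Finset.single_le_sum (f := fun t => d (T + t))
          (fun i _ => hdnonneg _) hmemr
        simp only [Nat.add_sub_cancel' hn] at this
        exact this
      have hle : d n ≤ ε / 2 := hsingle.trans (hT _)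
      rw [Real.dist_eq, sub_zero, abs_of_nonneg (hdnonneg n)]
      linarith
    have := (Real.continuous_sqrt.tendsto 0).comp hd0
    simpa [Function.comp_def, Real.sqrt_zero, hdd] using this
end
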